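/- Let R be a reduced commutative ring, let α₁, …, α_n ∈ R[[X]] be formal power series, and let d be a positive rational number. Suppose that for every i with 1 ≤ i ≤ n the order of the power series σ_i(α₁, …, α_n) is at least d·i (where the order takes values in ℕ ∪ {∞}, with ∞ exceeding every rational). Then the order of α_i is at least d for every i with 1 ≤ i ≤ n. -/

import Mathlib

open PowerSeries

/-- A ring hom commutes with `Multiset.esymm`. -/
lemma aux_esymm_map {A B : Type*} [CommRing A] [CommRing B] (f : A →+* B)
    (s : Multiset A) (k : ℕ) : f (s.esymm k) = (s.map f).esymm k := by
  simp only [Multiset.esymm, map_multiset_sum, Multiset.map_map, Multiset.powersetCard_map]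
  congr 1
  apply Multiset.map_congr rfl
  intro t _
  simp [map_multiset_prod]

/-- From a rational lower bound on the order, vanishing of small coefficients. -/
lemma aux_coeff_zero {S : Type*} [Semiring S] {φ : PowerSeries S} {q : ℚ}
    (h : (q : WithTop ℚ) ≤ WithTop.map (Nat.cast : ℕ → ℚ) φ.order)
    {m : ℕ} (hm : (m : ℚ) < q) : PowerSeries.coeff m φ = 0 := by
  apply PowerSeries.coeff_of_lt_order
  cases ho : φ.order with
  | top => exact lt_top_iff_ne_top.mpr (by simp)
  | coe t =>
      rw [ho] at h
      have hmap : WithTop.map (Nat.cast : ℕ → ℚ) ((t : ℕ) : ℕ∞) = (((t : ℚ)) : WithTop ℚ) := rfl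
      rw [hmap] at h
      have hqt : q ≤ (t : ℚ) := by exact_mod_cast h
      have h2 : (m : ℚ) < (t : ℚ) := lt_of_lt_of_le hm hqt
      have h3 : m < t := by exact_mod_cast h2
      exact_mod_cast h3

lemma aux_order_pow {K : Type*} [CommRing K] [IsDomain K] (φ : PowerSeries K) (k : ℕ) :
    (φ ^ k).order = k • φ.order := by
  induction k with
  | zero => simp [PowerSeries.order_one]
  | succ k ih => rw [pow_succ, PowerSeries.order_mul, ih, succ_nsmul]

/-- The key domain case. -/
lemma aux_domain {K : Type*} [CommRing K] [IsDomain K]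
    (n : ℕ) (β : Fin n → PowerSeries K) (d : ℚ) (hd : 0 < d)
    (hord : ∀ i : ℕ, 1 ≤ i → i ≤ n → ∀ m : ℕ, (m : ℚ) < d * i →
      PowerSeries.coeff m ((Multiset.map β (Finset.univ : Finset (Fin n)).val).esymm i) = 0) :
    ∀ j : Fin n, ∀ m : ℕ, (m : ℚ) < d → PowerSeries.coeff m (β j) = 0 := by
  intro j m hm
  -- if `m < order (β j)` we are done; otherwise the order is a finite `t ≤ m` and we derive
  -- a contradiction.
  by_cases hlt : (m : ℕ∞) < (β j).order
  · exact PowerSeries.coeff_of_lt_order m hlt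
  · exfalso
    push_neg at hlt
    obtain ⟨t, ht⟩ : ∃ t : ℕ, (β j).order = (t : ℕ∞) := by
      cases ho : (β j).order with
      | top => rw [ho] at hlt; exact absurd (le_antisymm le_top hlt) (by simp)
      | coe t => exact ⟨t, rfl⟩
    have htm : (t : ℕ∞) ≤ (m : ℕ∞) := ht ▸ hlt
    have htd : (t : ℚ) < d := lt_of_le_of_lt (by exact_mod_cast htm) hm
    -- the multiset of the `β`'s
    set S : Multiset (PowerSeries K) := Multiset.map β (Finset.univ : Finset (Fin n)).val with hS
    have hcard : Multiset.card S = n := by simp [hS]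
    -- the polynomial ∏ (X - C (β k))
    set P : Polynomial (PowerSeries K) := (S.map fun a => Polynomial.X - Polynomial.C a).prod
      with hP
    have hdeg : P.natDegree < n + 1 := by
      have h1 : P.natDegree ≤ ((S.map fun a => Polynomial.X - Polynomial.C a).map
          Polynomial.natDegree).sum := Polynomial.natDegree_multiset_prod_le _
      have h2 : ((S.map fun a => Polynomial.X - Polynomial.C a).map
          Polynomial.natDegree).sum = Multiset.card S := by
        rw [Multiset.map_map]
        have : ∀ a ∈ S, (Polynomial.natDegree ∘ fun a => Polynomial.X - Polynomial.C a) a = 1 :=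
          fun a _ => Polynomial.natDegree_X_sub_C a
        rw [Multiset.map_congr rfl this, Multiset.map_const', Multiset.sum_replicate, smul_eq_mul,
          mul_one]
      omega
    have heval : Polynomial.eval (β j) P = 0 := by
      rw [hP, Polynomial.eval_multiset_prod]
      apply Multiset.prod_eq_zero
      have hmem : β j ∈ S := by
        rw [hS]; exact Multiset.mem_map_of_mem β (Finset.mem_univ j)
      have : Polynomial.eval (β j) (Polynomial.X - Polynomial.C (β j)) = 0 := by simp
      rw [← this]
      rw [Multiset.map_map]
      exact Multiset.mem_map_of_mem _ hmem
    have hsum : (∑ k ∈ Finset.range (n + 1), P.coeff k * β j ^ k) = 0 := by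
      rw [← Polynomial.eval_eq_sum_range' hdeg]; exact heval
    set N := n * t with hN
    have hcoeffsum : (∑ k ∈ Finset.range (n + 1),
        PowerSeries.coeff N (P.coeff k * β j ^ k)) = 0 := by
      rw [← map_sum, hsum, map_zero]
    -- coefficient of `P`
    have hPcoeff : ∀ k ≤ n, P.coeff k = (-1) ^ (n - k) * S.esymm (n - k) := by
      intro k hk
      rw [hP, Multiset.prod_X_sub_C_coeff S (hcard ▸ hk), hcard]
    -- the top term has nonzero coefficient
    have htop : PowerSeries.coeff N (P.coeff n * β j ^ n) ≠ 0 := by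
      rw [hPcoeff n le_rfl, Nat.sub_self]
      have hE0 : S.esymm 0 = 1 := by simp [Multiset.esymm]
      rw [hE0, pow_zero, one_mul, one_mul]
      have horder : (β j ^ n).order = (N : ℕ∞) := by
        rw [aux_order_pow, ht, hN]
        simp [nsmul_eq_mul]
      exact (PowerSeries.order_eq_nat.mp horder).1
    -- lower terms vanish
    have hlow : ∀ k ∈ Finset.range (n + 1), k ≠ n →
        PowerSeries.coeff N (P.coeff k * β j ^ k) = 0 := by
      intro k hk hkn
      have hkn' : k < n := by
        simp only [Finset.mem_range] at hk; omega
      set s := n - k with hs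
      have hs1 : 1 ≤ s := by omega
      have hsn : s ≤ n := by omega
      rw [hPcoeff k (le_of_lt hkn')]
      -- rewrite (-1)^s as a constant
      have hneg : ((-1 : PowerSeries K) ^ s) = PowerSeries.C ((-1 : K) ^ s) := by
        rw [map_pow, map_neg, map_one]
      rw [mul_assoc, hneg, PowerSeries.coeff_C_mul]
      have hEord : ((t * s + 1 : ℕ) : ℕ∞) ≤ (S.esymm s).order := by
        apply PowerSeries.nat_le_order
        intro a ha
        apply hord s hs1 hsn
        have h1 : (a : ℚ) ≤ (t : ℚ) * s := by
          have : a ≤ t * s := by omega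
          exact_mod_cast this
        have h2 : (t : ℚ) * s < d * s := by
          apply mul_lt_mul_of_pos_right htd
          exact_mod_cast hs1
        exact lt_of_le_of_lt h1 h2
      have hβord : (β j ^ k).order = ((k * t : ℕ) : ℕ∞) := by
        rw [aux_order_pow, ht]
        simp [nsmul_eq_mul]
      have hmul : ((N : ℕ∞)) < (S.esymm s * β j ^ k).order := by
        rw [PowerSeries.order_mul, hβord]
        have h1 : ((t * s + 1 + k * t : ℕ) : ℕ∞) ≤ (S.esymm s).order + ((k * t : ℕ) : ℕ∞) := by
          rw [Nat.cast_add]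
          exact add_le_add_left hEord _
        refine lt_of_lt_of_le ?_ h1
        have h4 : s + k = n := by omega
        have h3 : N = t * s + k * t := by
          rw [hN, mul_comm t s, ← add_mul, h4]
        have h5 : N < t * s + 1 + k * t := by omega
        exact_mod_cast h5
      rw [PowerSeries.coeff_of_lt_order N hmul, mul_zero]
    have := Finset.sum_eq_single_of_mem n (Finset.self_mem_range_succ n) hlow
    rw [this] at hcoeffsum
    exact htop hcoeffsum

theorem statement15 {R : Type*} [CommRing R] [IsReduced R]
    (n : ℕ) (α : Fin n → PowerSeries R) (d : ℚ) (hd : 0 < d)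
    (hord : ∀ i : ℕ, 1 ≤ i → i ≤ n →
      ((d * i : ℚ) : WithTop ℚ) ≤
        WithTop.map (Nat.cast : ℕ → ℚ)
          ((Multiset.map α (Finset.univ : Finset (Fin n)).val).esymm i).order) :
    ∀ i : Fin n, ((d : ℚ) : WithTop ℚ) ≤ WithTop.map (Nat.cast : ℕ → ℚ) (α i).order := by
  -- It suffices to show all coefficients of degree `m` with `m < d` vanish.
  have key : ∀ i : Fin n, ∀ m : ℕ, (m : ℚ) < d → PowerSeries.coeff m (α i) = 0 := by
    intro i m hm
    -- reduce to quotients by primes, via the nilradical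
    have hnil : IsNilpotent (PowerSeries.coeff m (α i)) := by
      rw [← mem_nilradical, nilradical_eq_sInf, Ideal.mem_sInf]
      rintro p hp
      haveI : p.IsPrime := hp
      -- pass to the quotient domain
      set f := Ideal.Quotient.mk p with hf
      set β : Fin n → PowerSeries (R ⧸ p) := fun k => PowerSeries.map f (α k) with hβ
      have hordq : ∀ i' : ℕ, 1 ≤ i' → i' ≤ n → ∀ m' : ℕ, (m' : ℚ) < d * i' →
          PowerSeries.coeff m'
            ((Multiset.map β (Finset.univ : Finset (Fin n)).val).esymm i') = 0 := by
        intro i' h1 h2 m' hm'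
        have hmapped : (Multiset.map β (Finset.univ : Finset (Fin n)).val).esymm i' =
            PowerSeries.map f ((Multiset.map α (Finset.univ : Finset (Fin n)).val).esymm i') := by
          rw [aux_esymm_map (PowerSeries.map f), Multiset.map_map]
          rfl
        rw [hmapped, PowerSeries.coeff_map,
          aux_coeff_zero (hord i' h1 h2) hm', map_zero]
      have := aux_domain n β d hd hordq i m hm
      rw [hβ] at this
      simp only [PowerSeries.coeff_map] at this
      exact Ideal.Quotient.eq_zero_iff_mem.mp this
    exact IsNilpotent.eq_zero hnil
  intro i
  -- now conclude the order bound
  have horder : ((⌈d⌉₊ : ℕ) : ℕ∞) ≤ (α i).order := by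
    apply PowerSeries.nat_le_order
    intro a ha
    exact key i a (Nat.lt_ceil.mp ha)
  cases ho : (α i).order with
  | top => exact le_top
  | coe t =>
      rw [ho] at horder
      have h1 : ⌈d⌉₊ ≤ t := by exact_mod_cast horder
      have h2 : d ≤ (t : ℚ) := le_trans (Nat.le_ceil d) (by exact_mod_cast h1)
      have hmap : WithTop.map (Nat.cast : ℕ → ℚ) ((t : ℕ) : ℕ∞) = (((t : ℚ)) : WithTop ℚ) := rfl
      rw [hmap]
      exact_mod_cast h2
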